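/- arXiv:1109.4335 — 3 statements merged into one kernel-verified Lean document; each statement's English description precedes it below -/
import Mathlib

section
/- For every valuation v, the nondecreasing sequence of iterates v⁽ⁿ⁾ (v⁽⁰⁾ = v, v⁽ⁿ⁺¹⁾ = (v⁽ⁿ⁾)') is eventually constant: there exists N such that v⁽ⁿ⁾ = v⁽ᴺ⁾ for all n ≥ N. Its eventual value v* (the upper revised valuation) defines a map v ↦ v* that is continuous as a map from [0,1]^P to itself, is monotone (v ≤ w pointwise implies v* ≤ w* pointwise), satisfies v ≤ v* pointwise, and the image set {v*(p) : p ∈ P} is contained in the image set {v(p) : p ∈ P}. -/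
/-- The box of valuations: functions `P → ℝ` with values in `[0,1]`. -/
def unitBox (P : Type*) : Set (P → ℝ) := {v | ∀ p, v p ∈ Set.Icc (0:ℝ) 1}

/-- The one-step revision of a valuation `v` with respect to the doctrine `D`:
`v'(p)` is the max over clauses `C ∈ D` with `p ∈ C` of the min over `q ∈ C \ {p}`
of `v(¬q)`. -/
noncomputable def step {P : Type*} (neg : P → P) (D : Finset (Finset P))
    (v : P → ℝ) : P → ℝ :=
  fun p => sSup {m : ℝ | ∃ C ∈ D, p ∈ C ∧
    m = sInf {b : ℝ | ∃ q ∈ C, q ≠ p ∧ b = v (neg q)}}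

section Aux

variable {P : Type*} [Fintype P] [DecidableEq P]

private lemma cont_sup' {ι X : Type*} [TopologicalSpace X] (s : Finset ι)
    (f : ι → X → ℝ) (hf : ∀ i ∈ s, Continuous (f i)) (hs : s.Nonempty) :
    Continuous fun v => s.sup' hs (fun i => f i v) := by
  induction s using Finset.cons_induction with
  | empty => exact absurd hs (by simp)
  | cons a t ha ih =>
    rcases t.eq_empty_or_nonempty with rfl | ht
    · simpa using hf a (by simp)
    · simp only [Finset.sup'_cons ht]
      exact (hf a (by simp)).sup (ih (fun i hi => hf i (by simp [hi])) ht)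

private lemma cont_inf' {ι X : Type*} [TopologicalSpace X] (s : Finset ι)
    (f : ι → X → ℝ) (hf : ∀ i ∈ s, Continuous (f i)) (hs : s.Nonempty) :
    Continuous fun v => s.inf' hs (fun i => f i v) := by
  induction s using Finset.cons_induction with
  | empty => exact absurd hs (by simp)
  | cons a t ha ih =>
    rcases t.eq_empty_or_nonempty with rfl | ht
    · simpa using hf a (by simp)
    · simp only [Finset.inf'_cons ht]
      exact (hf a (by simp)).inf (ih (fun i hi => hf i (by simp [hi])) ht)

variable (neg : P → P) (D : Finset (Finset P))

private lemma erase_ne {C : Finset P} {p : P} (h2 : 2 ≤ C.card) (hp : p ∈ C) :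
    (C.erase p).Nonempty := by
  rw [← Finset.card_pos, Finset.card_erase_of_mem hp]; omega

private lemma filt_ne (hem : ∀ p : P, ({p, neg p} : Finset P) ∈ D) (p : P) :
    (D.filter (fun C => p ∈ C)).Nonempty :=
  ⟨{p, neg p}, by simp [hem p]⟩

private lemma inner_eq (v : P → ℝ) (p : P) {C : Finset P} (hC : (C.erase p).Nonempty) :
    sInf {b : ℝ | ∃ q ∈ C, q ≠ p ∧ b = v (neg q)}
      = (C.erase p).inf' hC (fun q => v (neg q)) := by
  rw [Finset.inf'_eq_csInf_image]
  refine congrArg sInf ?_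
  ext b
  simp only [Set.mem_setOf_eq, Set.mem_image, Finset.coe_erase, Set.mem_diff,
    Finset.mem_coe, Set.mem_singleton_iff]
  constructor
  · rintro ⟨q, hq, hqp, rfl⟩; exact ⟨q, ⟨hq, hqp⟩, rfl⟩
  · rintro ⟨q, ⟨hq, hqp⟩, rfl⟩; exact ⟨q, hq, hqp, rfl⟩

private lemma step_eq (hem : ∀ p : P, ({p, neg p} : Finset P) ∈ D) (v : P → ℝ) (p : P) :
    step neg D v p = (D.filter (fun C => p ∈ C)).sup' (filt_ne neg D hem p)
      (fun C => sInf {b : ℝ | ∃ q ∈ C, q ≠ p ∧ b = v (neg q)}) := by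
  rw [Finset.sup'_eq_csSup_image]
  refine congrArg sSup ?_
  ext m
  simp only [Set.mem_setOf_eq, Set.mem_image, Finset.coe_filter]
  constructor
  · rintro ⟨C, hC, hp, rfl⟩; exact ⟨C, ⟨hC, hp⟩, rfl⟩
  · rintro ⟨C, ⟨hC, hp⟩, rfl⟩; exact ⟨C, hC, hp, rfl⟩

private lemma step_mono (hcard : ∀ C ∈ D, 2 ≤ C.card)
    (hem : ∀ p : P, ({p, neg p} : Finset P) ∈ D)
    {v w : P → ℝ} (hvw : v ≤ w) : step neg D v ≤ step neg D w := by
  intro p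
  rw [step_eq neg D hem, step_eq neg D hem]
  apply Finset.sup'_mono_fun
  intro C hC
  rw [Finset.mem_filter] at hC
  have h1 := erase_ne (hcard C hC.1) hC.2
  rw [inner_eq neg v p h1, inner_eq neg w p h1]
  exact Finset.le_inf' _ _ fun q hq => le_trans (Finset.inf'_le _ hq) (hvw _)

private lemma inner_em (hinv : ∀ p, neg (neg p) = p) (hneg : ∀ p, neg p ≠ p)
    (v : P → ℝ) (p : P) :
    {b : ℝ | ∃ q ∈ ({p, neg p} : Finset P), q ≠ p ∧ b = v (neg q)} = {v p} := by
  ext b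
  simp only [Set.mem_setOf_eq, Finset.mem_insert, Finset.mem_singleton,
    Set.mem_singleton_iff]
  constructor
  · rintro ⟨q, hq | hq, hqp, rfl⟩
    · exact absurd hq hqp
    · rw [hq, hinv]
  · rintro rfl
    exact ⟨neg p, Or.inr rfl, hneg p, by rw [hinv]⟩

private lemma le_step (hinv : ∀ p, neg (neg p) = p) (hneg : ∀ p, neg p ≠ p)
    (hem : ∀ p : P, ({p, neg p} : Finset P) ∈ D) (v : P → ℝ) :
    v ≤ step neg D v := by
  intro p
  rw [step_eq neg D hem]
  have hmem : ({p, neg p} : Finset P) ∈ D.filter (fun C => p ∈ C) := by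
    simp [hem p]
  refine le_trans ?_ (Finset.le_sup' _ hmem)
  rw [inner_em neg hinv hneg]
  exact (csInf_singleton (v p)).ge

private lemma step_mem_range (hcard : ∀ C ∈ D, 2 ≤ C.card)
    (hem : ∀ p : P, ({p, neg p} : Finset P) ∈ D) (v : P → ℝ) (p : P) :
    step neg D v p ∈ Set.range v := by
  rw [step_eq neg D hem]
  obtain ⟨C, hC, hCe⟩ := Finset.exists_mem_eq_sup' (filt_ne neg D hem p)
    (fun C => sInf {b : ℝ | ∃ q ∈ C, q ≠ p ∧ b = v (neg q)})
  rw [hCe]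
  rw [Finset.mem_filter] at hC
  rw [inner_eq neg v p (erase_ne (hcard C hC.1) hC.2)]
  obtain ⟨q, hq, hqe⟩ := Finset.exists_mem_eq_inf' (erase_ne (hcard C hC.1) hC.2)
    (fun q => v (neg q))
  rw [hqe]
  exact ⟨neg q, rfl⟩

private lemma step_cont (hcard : ∀ C ∈ D, 2 ≤ C.card)
    (hem : ∀ p : P, ({p, neg p} : Finset P) ∈ D) :
    Continuous (step neg D) := by
  apply continuous_pi
  intro p
  have h1 : (fun v : P → ℝ => step neg D v p)
      = fun v => (D.filter (fun C => p ∈ C)).sup' (filt_ne neg D hem p)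
        (fun C => sInf {b : ℝ | ∃ q ∈ C, q ≠ p ∧ b = v (neg q)}) :=
    funext fun v => step_eq neg D hem v p
  rw [h1]
  apply cont_sup'
  intro C hC
  rw [Finset.mem_filter] at hC
  have h2 := erase_ne (hcard C hC.1) hC.2
  have h3 : (fun v : P → ℝ => sInf {b : ℝ | ∃ q ∈ C, q ≠ p ∧ b = v (neg q)})
      = fun v => (C.erase p).inf' h2 (fun q => v (neg q)) :=
    funext fun v => inner_eq neg v p h2
  rw [h3]
  exact cont_inf' _ _ (fun q _ => continuous_apply (neg q)) h2

end Aux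

theorem stmt1 {P : Type*} [Fintype P] [DecidableEq P]
    (neg : P → P) (hinv : ∀ p, neg (neg p) = p) (hneg : ∀ p, neg p ≠ p)
    (D : Finset (Finset P))
    (hcard : ∀ C ∈ D, 2 ≤ C.card)
    (hem : ∀ p : P, ({p, neg p} : Finset P) ∈ D) :
    -- the sequence of iterates is nondecreasing
    (∀ v : P → ℝ, v ∈ unitBox P → ∀ n : ℕ,
      (step neg D)^[n] v ≤ (step neg D)^[n + 1] v) ∧
    -- it is eventually constant, and its eventual value defines a map v ↦ v*
    ∃ F : (P → ℝ) → (P → ℝ),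
      (∀ v : P → ℝ, v ∈ unitBox P →
        ∃ N : ℕ, ∀ n ≥ N, (step neg D)^[n] v = F v) ∧
      -- continuous as a map from [0,1]^P to itself
      ContinuousOn F (unitBox P) ∧
      Set.MapsTo F (unitBox P) (unitBox P) ∧
      -- monotone
      (∀ v w : P → ℝ, v ∈ unitBox P → w ∈ unitBox P → v ≤ w → F v ≤ F w) ∧
      -- v ≤ v*
      (∀ v : P → ℝ, v ∈ unitBox P → v ≤ F v) ∧
      -- image set containment
      (∀ v : P → ℝ, v ∈ unitBox P → Set.range (F v) ⊆ Set.range v) := by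
  set s := step neg D with hs
  set K := (Fintype.card P) ^ (Fintype.card P) with hK
  have hle : ∀ v : P → ℝ, v ≤ s v := le_step neg D hinv hneg hem
  have hmonoIter : ∀ (v : P → ℝ) (n : ℕ), s^[n] v ≤ s^[n+1] v := by
    intro v n
    rw [Function.iterate_succ_apply']
    exact hle _
  have hmonoSeq : ∀ v : P → ℝ, Monotone (fun n => s^[n] v) := fun v =>
    monotone_nat_of_le_succ (hmonoIter v)
  have hrangeIter : ∀ (v : P → ℝ) (n : ℕ), Set.range (s^[n] v) ⊆ Set.range v := by
    intro v n
    induction n with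
    | zero => simp
    | succ n ih =>
      rintro x ⟨p, rfl⟩
      rw [Function.iterate_succ_apply']
      exact ih (step_mem_range neg D hcard hem _ p)
  -- eventual constancy with uniform bound K
  have hconst : ∀ v : P → ℝ, ∀ n ≥ K, s^[n] v = s^[K] v := by
    intro v
    set T : Finset ℝ := Finset.image v Finset.univ with hT
    have hmemT : ∀ (n : ℕ) (p : P), s^[n] v p ∈ T := by
      intro n p
      obtain ⟨q, hq⟩ := hrangeIter v n ⟨p, rfl⟩
      rw [← hq]
      exact Finset.mem_image_of_mem v (Finset.mem_univ q)
    have hcardlt : Fintype.card (P → {x // x ∈ T}) < Fintype.card (Fin (K+1)) := by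
      rw [Fintype.card_fun, Fintype.card_coe, Fintype.card_fin]
      exact Nat.lt_succ_of_le (Nat.pow_le_pow_left (by
        simpa using Finset.card_image_le (s := Finset.univ) (f := v)) _)
    obtain ⟨i, j, hij, hfeq⟩ := Fintype.exists_ne_map_eq_of_card_lt
      (fun n : Fin (K+1) => fun p => (⟨s^[(n : ℕ)] v p, hmemT n p⟩ : {x // x ∈ T}))
      hcardlt
    have huij : s^[(i : ℕ)] v = s^[(j : ℕ)] v := by
      funext p
      exact congrArg Subtype.val (congrFun hfeq p)
    -- wlog i < j
    obtain ⟨a, b, hab, hbK, heq⟩ : ∃ a b : ℕ, a < b ∧ b ≤ K ∧ s^[a] v = s^[b] v := by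
      rcases lt_or_gt_of_ne hij with h | h
      · exact ⟨i, j, h, Nat.lt_succ_iff.mp j.isLt, huij⟩
      · exact ⟨j, i, h, Nat.lt_succ_iff.mp i.isLt, huij.symm⟩
    have hfix : s^[a] v = s^[a+1] v :=
      le_antisymm (hmonoIter v a) (heq ▸ hmonoSeq v (Nat.succ_le_of_lt hab))
    have hstable : ∀ m ≥ a, s^[m] v = s^[a] v := by
      intro m hm
      obtain ⟨k, rfl⟩ := Nat.exists_eq_add_of_le hm
      induction k with
      | zero => rfl
      | succ k ih =>
        rw [← Nat.add_assoc, Function.iterate_succ_apply', ih (Nat.le_add_right a k)]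
        exact ((Function.iterate_succ_apply' s a v).symm.trans hfix.symm)
    have haK : a ≤ K := le_of_lt (lt_of_lt_of_le hab hbK)
    intro n hn
    rw [hstable n (le_trans haK hn), hstable K haK]
  refine ⟨fun v _ n => hmonoIter v n, s^[K], ?_, ?_, ?_, ?_, ?_, ?_⟩
  · exact fun v _ => ⟨K, fun n hn => hconst v n hn⟩
  · -- continuity
    have : Continuous (s^[K]) := by
      induction K with
      | zero => exact continuous_id
      | succ n ih =>
        rw [Function.iterate_succ]
        exact ih.comp (step_cont neg D hcard hem)
    exact this.continuousOn
  · -- maps to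
    intro v hv p
    obtain ⟨q, hq⟩ := hrangeIter v K ⟨p, rfl⟩
    rw [← hq]
    exact hv q
  · -- monotone
    intro v w _ _ hvw
    induction K with
    | zero => exact hvw
    | succ n ih =>
      rw [Function.iterate_succ_apply', Function.iterate_succ_apply']
      exact step_mono neg D hcard hem ih
  · -- v ≤ F v
    intro v _
    simpa using hmonoSeq v (Nat.zero_le K)
  · -- range
    exact fun v _ => hrangeIter v K
end

section
/- Let the initial valuation satisfy v(s_x) = v(¬s_x) = 0 for all x ∈ I, with arbitrary values v(p_{xy}) ∈ [0,1], and set c_x = max over y ≠ x of v(p_{yx}). Then x is a supremacy winner, i.e., v*(s_x) ≥ v*(¬s_x) for the upper revised valuation v*, if and only if x minimizes c_x, i.e., c_x ≤ c_y for all y ∈ I. -/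
/-- A valuation for the supremacy doctrine: degrees of belief for the literals
`s_x` ("x is supreme"), `¬s_x`, and `p_{xy}` ("x is preferable to y", for
distinct `x, y`), under the identification `¬p_{xy} = p_{yx}`. -/
structure SVal (I : Type*) where
  s : I → ℝ
  ns : I → ℝ
  p : I → I → ℝ

/-- Max over a (possibly empty) index set of reals: the empty max is `0`
(note `Real.sSup_empty = 0`). -/
noncomputable def sup0 (S : Set ℝ) : ℝ := sSup S

open Classical in
/-- Min over a (possibly empty) index set of reals: the empty min is `1`. -/
noncomputable def inf1 (S : Set ℝ) : ℝ := if S.Nonempty then sInf S else 1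

/-- The one-step revision operator associated with the supremacy doctrine. -/
noncomputable def Tsup {I : Type*} (v : SVal I) : SVal I where
  s := fun x => max (v.s x)
    (max (inf1 {b : ℝ | ∃ y, y ≠ x ∧ b = v.ns y})
         (inf1 {b : ℝ | ∃ y, y ≠ x ∧ b = v.p x y}))
  ns := fun x => max (v.ns x) (sup0 {b : ℝ | ∃ y, y ≠ x ∧ b = v.p y x})
  p := fun x y => max (v.p x y)
    (max (v.s x)
         (min (v.ns y) (inf1 {b : ℝ | ∃ z, z ≠ x ∧ z ≠ y ∧ b = v.p y z})))

lemma finite_shape {α : Type*} [Finite α] (Q : α → Prop) (f : α → ℝ) :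
    {b : ℝ | ∃ y, Q y ∧ b = f y}.Finite :=
  (Set.finite_range f).subset (by rintro b ⟨y, _, rfl⟩; exact ⟨y, rfl⟩)

lemma finite_shape2 {α : Type*} [Finite α] (Q R : α → Prop) (f : α → ℝ) :
    {b : ℝ | ∃ y, Q y ∧ R y ∧ b = f y}.Finite :=
  (Set.finite_range f).subset (by rintro b ⟨y, _, _, rfl⟩; exact ⟨y, rfl⟩)

lemma sup0_le {S : Set ℝ} {a : ℝ} (ha : 0 ≤ a) (h : ∀ b ∈ S, b ≤ a) : sup0 S ≤ a := by
  rcases S.eq_empty_or_nonempty with rfl | hne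
  · simpa [sup0, Real.sSup_empty] using ha
  · exact csSup_le hne h

lemma le_sup0 {S : Set ℝ} (hS : S.Finite) {b : ℝ} (hb : b ∈ S) : b ≤ sup0 S :=
  le_csSup hS.bddAbove hb

lemma inf1_le {S : Set ℝ} (hS : S.Finite) {b : ℝ} (hb : b ∈ S) : inf1 S ≤ b := by
  rw [inf1, if_pos ⟨b, hb⟩]; exact csInf_le hS.bddBelow hb

lemma le_inf1 {S : Set ℝ} {a : ℝ} (ha : a ≤ 1) (h : ∀ b ∈ S, a ≤ b) : a ≤ inf1 S := by
  rw [inf1]; split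
  · exact le_csInf ‹S.Nonempty› h
  · exact ha

/-- With zero initial belief in the `s_x` and `¬s_x`, an option `x` is a
supremacy winner (i.e. `s_x` is not rejected by the upper revised valuation)
iff it minimizes `c_x = max_{y ≠ x} v(p_{yx})`: the minimax rule. -/
theorem stmt7 {I : Type*} [Fintype I] [DecidableEq I]
    (hcard : 2 ≤ Fintype.card I)
    (v : SVal I)
    (hbox : ∀ x y : I, x ≠ y → v.p x y ∈ Set.Icc (0:ℝ) 1)
    (hs : ∀ x, v.s x = 0) (hns : ∀ x, v.ns x = 0)
    (c : I → ℝ) (hc : ∀ x, c x = sup0 {b : ℝ | ∃ y, y ≠ x ∧ b = v.p y x})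
    (vstar : SVal I) (hstar : ∃ N : ℕ, ∀ n ≥ N, Tsup^[n] v = vstar)
    (x : I) :
    vstar.ns x ≤ vstar.s x ↔ ∀ y : I, c x ≤ c y := by
  classical
  obtain ⟨N, hN⟩ := hstar
  have hv : vstar = Tsup^[N] v := (hN N le_rfl).symm
  have hfix : Tsup vstar = vstar := by
    calc Tsup vstar = Tsup^[N+1] v := by
          rw [hv]; exact (Function.iterate_succ_apply' Tsup N v).symm
    _ = vstar := hN (N+1) (by omega)
  have hne : ∀ a : I, ∃ y, y ≠ a := fun a =>
    Fintype.exists_ne_of_one_lt_card (by omega) a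
  have hpc : ∀ y a : I, y ≠ a → v.p y a ≤ c a := by
    intro y a hy
    rw [hc a]
    exact le_sup0 (finite_shape _ _) ⟨y, hy, rfl⟩
  have hc0 : ∀ a, 0 ≤ c a := by
    intro a
    obtain ⟨y, hy⟩ := hne a
    exact (hbox y a hy).1.trans (hpc y a hy)
  have hc1 : ∀ a, c a ≤ 1 := by
    intro a
    rw [hc a]
    refine sup0_le zero_le_one ?_
    rintro b ⟨y, hy, rfl⟩
    exact (hbox y a hy).2
  -- minimizer of c over complement of x
  have hmin : ∀ a : I, ∃ y, y ≠ a ∧ ∀ z, z ≠ a → c y ≤ c z := by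
    intro a
    obtain ⟨y, hy⟩ := hne a
    obtain ⟨y₀, hmem, hy₀⟩ := Finset.exists_min_image (Finset.univ.erase a) c
      ⟨y, by simp [hy]⟩
    exact ⟨y₀, by simpa using (Finset.mem_erase.mp hmem).1,
      fun z hz => hy₀ z (by simp [hz])⟩
  choose w hw hwmin using hmin
  -- monotone growth of ns and p components
  have hgrow : ∀ n : ℕ, (∀ a, v.ns a ≤ (Tsup^[n] v).ns a) ∧
      (∀ a b, v.p a b ≤ (Tsup^[n] v).p a b) := by
    intro n
    induction n with
    | zero => simp
    | succ n ih =>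
      constructor
      · intro a
        rw [Function.iterate_succ_apply']
        exact (ih.1 a).trans (le_max_left _ _)
      · intro a b
        rw [Function.iterate_succ_apply']
        exact (ih.2 a b).trans (le_max_left _ _)
  -- invariant: upper bounds
  have key : ∀ n : ℕ, (∀ a, (Tsup^[n] v).s a ≤ c (w a)) ∧
      (∀ a, (Tsup^[n] v).ns a ≤ c a) ∧
      (∀ a b, a ≠ b → (Tsup^[n] v).p a b ≤ max (v.p a b) (c (w a))) := by
    intro n
    induction n with
    | zero =>
      refine ⟨fun a => ?_, fun a => ?_, fun a b _ => le_max_left _ _⟩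
      · rw [Function.iterate_zero_apply, hs a]; exact hc0 _
      · rw [Function.iterate_zero_apply, hns a]; exact hc0 _
    | succ n ih =>
      obtain ⟨ihs, ihns, ihp⟩ := ih
      set u := Tsup^[n] v with hu
      have hdle : ∀ a z, z ≠ a → c (w a) ≤ c z := fun a => hwmin a
      refine ⟨fun a => ?_, fun a => ?_, fun a b hab => ?_⟩
      · rw [Function.iterate_succ_apply']
        simp only [Tsup]
        refine max_le (ihs a) (max_le ?_ ?_)
        · exact (inf1_le (finite_shape _ _) ⟨w a, hw a, rfl⟩).trans (ihns (w a))
        · refine (inf1_le (finite_shape _ _) ⟨w a, hw a, rfl⟩).trans ?_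
          refine (ihp a (w a) (Ne.symm (hw a))).trans (max_le ?_ le_rfl)
          exact hpc a (w a) (Ne.symm (hw a))
      · rw [Function.iterate_succ_apply']
        simp only [Tsup]
        refine max_le (ihns a) (sup0_le (hc0 a) ?_)
        rintro b ⟨y, hy, rfl⟩
        refine (ihp y a hy).trans (max_le (hpc y a hy) (hdle y a ?_))
        exact fun h => hy h.symm
      · rw [Function.iterate_succ_apply']
        simp only [Tsup]
        refine max_le (ihp a b hab) (max_le ((ihs a).trans (le_max_right _ _)) ?_)
        refine le_trans ?_ (le_max_right (v.p a b) (c (w a)))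
        by_cases hwb : w a = b
        · exact (min_le_left _ _).trans (by rw [← hwb] at *; exact ihns (w a))
        · refine (min_le_right _ _).trans ?_
          refine (inf1_le (finite_shape2 _ _ _) ⟨w a, hw a, hwb, rfl⟩).trans ?_
          refine (ihp b (w a) (fun h => hwb h.symm)).trans
            (max_le (hpc b (w a) (fun h => hwb h.symm)) ?_)
          exact hdle b (w a) (fun h => hwb h)
  -- lower bound: c a ≤ vstar.ns a
  have hns0 : ∀ a, 0 ≤ vstar.ns a := by
    intro a
    rw [hv]
    exact le_trans (by rw [hns a]) ((hgrow N).1 a)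
  have hnslow : ∀ a, c a ≤ vstar.ns a := by
    intro a
    have heq := congrFun (congrArg SVal.ns hfix) a
    simp only [Tsup] at heq
    have hsup : sup0 {b : ℝ | ∃ y, y ≠ a ∧ b = vstar.p y a} ≤ vstar.ns a :=
      max_eq_left_iff.mp heq
    rw [hc a]
    refine sup0_le (hns0 a) ?_
    rintro b ⟨y, hy, rfl⟩
    refine le_trans ?_ hsup
    refine le_trans ?_ (le_sup0 (finite_shape _ _) ⟨y, hy, rfl⟩)
    rw [hv]; exact (hgrow N).2 y a
  have hnsup : ∀ a, vstar.ns a ≤ c a := by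
    intro a; rw [hv]; exact (key N).2.1 a
  have hsup2 : ∀ a, vstar.s a ≤ c (w a) := by
    intro a; rw [hv]; exact (key N).1 a
  -- lower bound on s: inf of ns values
  have hslow : inf1 {b : ℝ | ∃ y, y ≠ x ∧ b = vstar.ns y} ≤ vstar.s x := by
    have heq := congrFun (congrArg SVal.s hfix) x
    simp only [Tsup] at heq
    exact (le_max_left _ _).trans (max_eq_left_iff.mp heq)
  constructor
  · intro h y
    by_cases hyx : y = x
    · exact le_of_eq (by rw [hyx])
    · calc c x ≤ vstar.ns x := hnslow x
        _ ≤ vstar.s x := h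
        _ ≤ c (w x) := hsup2 x
        _ ≤ c y := hwmin x y hyx
  · intro h
    refine (hnsup x).trans (le_trans ?_ hslow)
    refine le_inf1 (hc1 x) ?_
    rintro b ⟨y, _, rfl⟩
    exact (h y).trans (hnslow y)
end

section
/- Assume v(p_{xy}) + v(p_{yx}) ≤ 1 for all distinct x, y ∈ I and let the initial valuation satisfy v(t_x) = v(¬t_x) = 0 for all x. If a ∈ I is a Condorcet loser, i.e., v(p_{ya}) > 1/2 for every y ≠ a, then the symmetric prominence method rejects a as a prominent option: the upper revised valuation satisfies v*(¬t_a) > v*(t_a). -/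
/-- A valuation for prominence doctrines: degrees of belief for the literals
`t_x` ("x is prominent"), `¬t_x`, and `p_{xy}` ("x is preferable to y", for
distinct `x, y`), under the identification `¬p_{xy} = p_{yx}`. -/
structure PVal (I : Type*) where
  t : I → ℝ
  nt : I → ℝ
  p : I → I → ℝ

/-- The one-step revision operator associated with the symmetric prominence
doctrine, whose clauses are `t_x ∨ ⋁_{y ≠ x} p_{yx}` and `¬t_x ∨ ⋁_{y ≠ x} p_{xy}`. -/
noncomputable def Tsym {I : Type*} (v : PVal I) : PVal I where
  t := fun x => max (v.t x) (inf1 {b : ℝ | ∃ y, y ≠ x ∧ b = v.p x y})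
  nt := fun x => max (v.nt x) (inf1 {b : ℝ | ∃ y, y ≠ x ∧ b = v.p y x})
  p := fun x y => max (v.p x y)
    (max (min (v.t x) (inf1 {b : ℝ | ∃ z, z ≠ x ∧ z ≠ y ∧ b = v.p z x}))
         (min (v.nt y) (inf1 {b : ℝ | ∃ z, z ≠ x ∧ z ≠ y ∧ b = v.p y z})))

/-- Sets of values of the relevant shape are finite. -/
lemma finset_aux {I : Type*} [Fintype I] (f : I → ℝ) (P : I → Prop) :
    {b : ℝ | ∃ y, P y ∧ b = f y}.Finite := by
  have h : {b : ℝ | ∃ y, P y ∧ b = f y} = f '' {y | P y} := by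
    ext b
    simp only [Set.mem_setOf_eq, Set.mem_image]
    constructor
    · rintro ⟨y, hy, rfl⟩; exact ⟨y, hy, rfl⟩
    · rintro ⟨y, hy, rfl⟩; exact ⟨y, hy, rfl⟩
  rw [h]
  exact (Set.toFinite _).image f

lemma inf1_le_of_mem {S : Set ℝ} (hS : S.Finite) {s : ℝ} (hs : s ∈ S) : inf1 S ≤ s := by
  rw [inf1, if_pos ⟨s, hs⟩]
  exact csInf_le hS.bddBelow hs

lemma le_inf1_s13 {S : Set ℝ} {c : ℝ} (h : ∀ s ∈ S, c ≤ s) (hc : c ≤ 1) : c ≤ inf1 S := by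
  rw [inf1]
  split
  · exact le_csInf ‹S.Nonempty› h
  · exact hc

/-- A Condorcet loser is always rejected as a prominent option by the
symmetric prominence method. -/
theorem stmt13 {I : Type*} [Fintype I] [DecidableEq I]
    (hcard : 2 ≤ Fintype.card I)
    (v : PVal I)
    (hbox : ∀ x y : I, x ≠ y → v.p x y ∈ Set.Icc (0:ℝ) 1)
    (hsum : ∀ x y : I, x ≠ y → v.p x y + v.p y x ≤ 1)
    (ht : ∀ x, v.t x = 0) (hnt : ∀ x, v.nt x = 0)
    (vstar : PVal I) (hstar : ∃ N : ℕ, ∀ n ≥ N, Tsym^[n] v = vstar)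
    (a : I) (hloser : ∀ y : I, y ≠ a → 1 / 2 < v.p y a) :
    vstar.t a < vstar.nt a := by
  obtain ⟨N, hN⟩ := hstar
  -- vstar is reached and is a fixed point
  have hNv : Tsym^[N] v = vstar := hN N le_rfl
  have hfix : Tsym vstar = vstar := by
    have h1 : Tsym^[N + 1] v = vstar := hN (N + 1) (Nat.le_succ N)
    rw [Function.iterate_succ_apply', hNv] at h1
    exact h1
  -- the set of beliefs in `y` beating `a`
  set S : Set ℝ := {b : ℝ | ∃ y, y ≠ a ∧ b = v.p y a} with hSdef
  have hSfin : S.Finite := finset_aux (fun y => v.p y a) (fun y => y ≠ a)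
  obtain ⟨y0, hy0⟩ := Fintype.exists_ne_of_one_lt_card (by omega) a
  have hSne : S.Nonempty := ⟨v.p y0 a, y0, hy0, rfl⟩
  set m : ℝ := inf1 S with hmdef
  have hmS : m ∈ S := by
    rw [hmdef, inf1, if_pos hSne]
    exact hSne.csInf_mem hSfin
  obtain ⟨ym, hym, hymeq⟩ := hmS
  have hm_half : 1 / 2 < m := hymeq ▸ hloser ym hym
  have hm_le_one : m ≤ 1 := hymeq ▸ (hbox ym a hym).2
  have hm_le : ∀ y : I, y ≠ a → m ≤ v.p y a := fun y hy =>
    inf1_le_of_mem hSfin ⟨y, hy, rfl⟩ |>.trans_eq rfl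
  -- the invariant
  have key : ∀ n : ℕ,
      (∀ x y : I, v.p x y ≤ (Tsym^[n] v).p x y) ∧
      (∀ y : I, y ≠ a → (Tsym^[n] v).p a y ≤ 1 - m) ∧
      ((Tsym^[n] v).t a ≤ 1 - m) ∧
      (∀ y : I, y ≠ a → (Tsym^[n] v).nt y ≤ 1 - m) := by
    intro n
    induction n with
    | zero =>
      simp only [Function.iterate_zero_apply]
      refine ⟨fun x y => le_rfl, fun y hy => ?_, ?_, fun y hy => ?_⟩
      · have h1 := hsum a y (Ne.symm hy)
        have h2 := hm_le y hy
        linarith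
      · rw [ht a]; linarith
      · rw [hnt y]; linarith
    | succ n ih =>
      obtain ⟨ihA, ihB, ihC, ihD⟩ := ih
      set w := Tsym^[n] v with hw
      rw [Function.iterate_succ_apply', ← hw]
      refine ⟨fun x y => ?_, fun y hy => ?_, ?_, fun y hy => ?_⟩
      · exact (ihA x y).trans (le_max_left _ _)
      · -- p a y bound
        show max (w.p a y) _ ≤ 1 - m
        refine max_le (ihB y hy) (max_le ?_ ?_)
        · exact (min_le_left _ _).trans ihC
        · exact (min_le_left _ _).trans (ihD y hy)
      · -- t a bound
        show max (w.t a) (inf1 {b : ℝ | ∃ z, z ≠ a ∧ b = w.p a z}) ≤ 1 - m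
        refine max_le ihC ?_
        calc inf1 {b : ℝ | ∃ z, z ≠ a ∧ b = w.p a z}
            ≤ w.p a y0 := inf1_le_of_mem (finset_aux _ _) ⟨y0, hy0, rfl⟩
          _ ≤ 1 - m := ihB y0 hy0
      · -- nt y bound for y ≠ a
        show max (w.nt y) (inf1 {b : ℝ | ∃ z, z ≠ y ∧ b = w.p z y}) ≤ 1 - m
        refine max_le (ihD y hy) ?_
        calc inf1 {b : ℝ | ∃ z, z ≠ y ∧ b = w.p z y}
            ≤ w.p a y := inf1_le_of_mem (finset_aux _ _) ⟨a, Ne.symm hy, rfl⟩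
          _ ≤ 1 - m := ihB y hy
  have hinv := key N
  rw [hNv] at hinv
  obtain ⟨hA, hB, hC, hD⟩ := hinv
  -- lower bound on vstar.nt a
  have hntlb : m ≤ vstar.nt a := by
    conv_rhs => rw [← hfix]
    show m ≤ max (vstar.nt a) (inf1 {b : ℝ | ∃ y, y ≠ a ∧ b = vstar.p y a})
    refine le_trans ?_ (le_max_right _ _)
    refine le_inf1_s13 ?_ hm_le_one
    rintro s ⟨y, hy, rfl⟩
    exact (hm_le y hy).trans (hA y a)
  calc vstar.t a ≤ 1 - m := hC
    _ < m := by linarith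
    _ ≤ vstar.nt a := hntlb
end
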